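/- Let λ_min = 3.87, A₀ = (1 − 1/λ_min, 3/4), L₁ = 1/λ_min − 1/4, L₂ = 4 − λ_min. For every x ∈ A₀ and every measurable set A ⊆ A₀, the Lebesgue measure of the set {λ ∈ (λ_min, 4) : λ·x·(1−x) ∈ A} divided by L₂ is at least (1/λ_min) times the Lebesgue measure of A divided by L₁. In other words, the one-step transition probability p(x,A) = (1/L₂)·Leb({λ ∈ (λ_min,4) : f_λ(x) ∈ A}) satisfies p(x,A) ≥ (1/λ_min)·φ(A), where φ is normalized Lebesgue measure on A₀. -/
import Mathlib

open Set MeasureTheory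

theorem minorization_lemma
    (x : ℝ) (hx : x ∈ Ioo (1 - 1/(3.87:ℝ)) (3/4))
    (A : Set ℝ) (hA : MeasurableSet A) (hAsub : A ⊆ Ioo (1 - 1/(3.87:ℝ)) (3/4)) :
    (volume {l : ℝ | l ∈ Ioo (3.87:ℝ) 4 ∧ l * x * (1 - x) ∈ A}).toReal / (4 - 3.87)
      ≥ (1/3.87) * ((volume A).toReal / (1/3.87 - 1/4)) := by
  obtain ⟨hx1, hx2⟩ := hx
  set c : ℝ := x * (1 - x) with hc_def
  have hc0 : 0 < c := by
    have : (0:ℝ) < x := by nlinarith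
    have : x < 1 := by nlinarith
    nlinarith
  have hc4 : c ≤ 1/4 := by nlinarith
  have hclow : 3/16 < c := by nlinarith
  have hcup : 3.87 * c ≤ 1 - 1/3.87 := by nlinarith
  -- the set equals the preimage of A under (· * c)
  have hset : {l : ℝ | l ∈ Ioo (3.87:ℝ) 4 ∧ l * x * (1 - x) ∈ A} = (· * c) ⁻¹' A := by
    ext l
    simp only [mem_setOf_eq, mem_preimage, mem_Ioo]
    constructor
    · rintro ⟨-, h⟩; rwa [mul_assoc] at h
    · intro h
      obtain ⟨ha1, ha2⟩ := hAsub h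
      refine ⟨⟨?_, ?_⟩, by rwa [mul_assoc]⟩
      · nlinarith
      · nlinarith
  rw [hset, Real.volume_preimage_mul_right (ne_of_gt hc0)]
  have hAfin : volume A < ⊤ :=
    lt_of_le_of_lt (measure_mono hAsub) (by simp [Real.volume_Ioo])
  rw [ENNReal.toReal_mul, ENNReal.toReal_ofReal (abs_nonneg _),
    abs_of_pos (inv_pos.mpr hc0)]
  set a : ℝ := (volume A).toReal with ha_def
  have ha0 : 0 ≤ a := ENNReal.toReal_nonneg
  have h1 : (1/3.87 : ℝ) * (a / (1/3.87 - 1/4)) = a * (4/0.13) := by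
    field_simp; ring
  rw [ge_iff_le, h1, le_div_iff₀ (by norm_num : (0:ℝ) < 4 - 3.87)]
  have hcinv : (4:ℝ) ≤ c⁻¹ := by
    rw [le_inv_comm₀ (by norm_num) hc0]; linarith
  nlinarith
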